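/- arXiv:1804.01381 — 4 statements merged into one kernel-verified Lean document; each statement's English description precedes it below -/
import Mathlib

section
/- Let K be a field and R = K[x_1,...,x_n]. If I is an ideal of R generated by a finite set B of polynomials such that for every pair of distinct elements f, g in B the leading monomials of f and g (with respect to a fixed monomial order) are relatively prime, then B is a Gröbner basis of I, i.e. the ideal generated by the leading terms of elements of I equals the ideal generated by the leading terms of elements of B. -/
open MvPolynomial

/-- The leading exponent (multidegree) of a multivariate polynomial with respect to a
monomial order. -/
noncomputable def MonomialOrder.lexp {σ : Type*} (m : MonomialOrder σ) {K : Type*}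
    [CommSemiring K] (f : MvPolynomial σ K) : σ →₀ ℕ :=
  m.toSyn.symm (f.support.sup fun d => m.toSyn d)

/-- The leading term of a multivariate polynomial with respect to a monomial order. -/
noncomputable def MonomialOrder.leadTerm {σ : Type*} (m : MonomialOrder σ) {K : Type*}
    [CommSemiring K] (f : MvPolynomial σ K) : MvPolynomial σ K :=
  monomial (m.lexp f) (f.coeff (m.lexp f))

/-- `G` is a Gröbner basis of the ideal `I`: `G ⊆ I` and the ideal generated by the
leading terms of elements of `I` equals the ideal generated by the leading terms of `G`. -/
def MonomialOrder.IsGroebnerBasis {σ : Type*} (m : MonomialOrder σ) {K : Type*} [Field K]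
    (I : Ideal (MvPolynomial σ K)) (G : Set (MvPolynomial σ K)) : Prop :=
  G ⊆ (I : Set (MvPolynomial σ K)) ∧
    Ideal.span (m.leadTerm '' (I : Set (MvPolynomial σ K))) =
      Ideal.span (m.leadTerm '' G)

set_option linter.unusedSectionVars false

namespace MonomialOrder

variable {σ K : Type*} (m : MonomialOrder σ)

section CommSemiring
variable [CommSemiring K]

lemma toSyn_lexp (f : MvPolynomial σ K) :
    m.toSyn (m.lexp f) = f.support.sup (fun d => m.toSyn d) :=
  m.toSyn.apply_symm_apply _

lemma le_lexp {f : MvPolynomial σ K} {d : σ →₀ ℕ} (hd : d ∈ f.support) :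
    m.toSyn d ≤ m.toSyn (m.lexp f) := by
  rw [toSyn_lexp]; exact Finset.le_sup hd

lemma lexp_mem_support {f : MvPolynomial σ K} (hf : f ≠ 0) : m.lexp f ∈ f.support := by
  obtain ⟨b, hb, he⟩ := Finset.exists_mem_eq_sup f.support
    (by rwa [Finset.nonempty_iff_ne_empty, Ne, MvPolynomial.support_eq_empty])
    (fun d => m.toSyn d)
  rw [lexp, he, m.toSyn.symm_apply_apply]
  exact hb

lemma coeff_lexp_ne_zero {f : MvPolynomial σ K} (hf : f ≠ 0) : f.coeff (m.lexp f) ≠ 0 :=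
  MvPolynomial.mem_support_iff.mp (m.lexp_mem_support hf)

lemma coeff_eq_zero_of_lt' {f : MvPolynomial σ K} {d : σ →₀ ℕ}
    (h : m.toSyn (m.lexp f) < m.toSyn d) : f.coeff d = 0 := by
  by_contra hc
  exact absurd (m.le_lexp (MvPolynomial.mem_support_iff.mpr hc)) (not_le.mpr h)

lemma lexp_le {f : MvPolynomial σ K} {δ : m.syn} (h : ∀ d ∈ f.support, m.toSyn d ≤ δ) :
    m.toSyn (m.lexp f) ≤ δ := by
  rw [toSyn_lexp]; exact Finset.sup_le h

lemma lexp_zero : m.lexp (0 : MvPolynomial σ K) = 0 := by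
  simp [lexp]

lemma lexp_monomial {a : σ →₀ ℕ} {c : K} (hc : c ≠ 0) :
    m.lexp (monomial a c) = a := by
  classical
  rw [lexp, MvPolynomial.support_monomial, if_neg hc]
  simp

end CommSemiring

section Field
variable [Field K] [DecidableEq σ]

lemma coeff_mul_lexp (f g : MvPolynomial σ K) :
    (f * g).coeff (m.lexp f + m.lexp g) = f.coeff (m.lexp f) * g.coeff (m.lexp g) := by
  rw [MvPolynomial.coeff_mul]
  apply Finset.sum_eq_single (m.lexp f, m.lexp g)
  · rintro ⟨u, v⟩ huv hne
    rw [Finset.HasAntidiagonal.mem_antidiagonal] at huv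
    by_contra hc
    have hu : m.toSyn u ≤ m.toSyn (m.lexp f) :=
      m.le_lexp (MvPolynomial.mem_support_iff.mpr (left_ne_zero_of_mul hc))
    have hv : m.toSyn v ≤ m.toSyn (m.lexp g) :=
      m.le_lexp (MvPolynomial.mem_support_iff.mpr (right_ne_zero_of_mul hc))
    have hsum : m.toSyn u + m.toSyn v = m.toSyn (m.lexp f) + m.toSyn (m.lexp g) := by
      rw [← map_add, ← map_add, huv]
    have hu' : m.toSyn u = m.toSyn (m.lexp f) := by
      by_contra h'
      exact absurd hsum (ne_of_lt (add_lt_add_of_lt_of_le (lt_of_le_of_ne hu h') hv))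
    have hv' : m.toSyn v = m.toSyn (m.lexp g) := by
      by_contra h'
      exact absurd hsum (ne_of_lt (add_lt_add_of_le_of_lt hu (lt_of_le_of_ne hv h')))
    exact hne (Prod.ext (m.toSyn.injective hu') (m.toSyn.injective hv'))
  · intro hmem
    exfalso
    apply hmem
    rw [Finset.HasAntidiagonal.mem_antidiagonal]

lemma lexp_mul {f g : MvPolynomial σ K} (hf : f ≠ 0) (hg : g ≠ 0) :
    m.lexp (f * g) = m.lexp f + m.lexp g := by
  have hc : (f * g).coeff (m.lexp f + m.lexp g) ≠ 0 := by
    rw [coeff_mul_lexp]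
    exact mul_ne_zero (m.coeff_lexp_ne_zero hf) (m.coeff_lexp_ne_zero hg)
  apply m.toSyn.injective
  apply le_antisymm
  · apply m.lexp_le
    intro d hd
    rw [MvPolynomial.mem_support_iff, MvPolynomial.coeff_mul] at hd
    obtain ⟨⟨u, v⟩, huv, hne⟩ := Finset.exists_ne_zero_of_sum_ne_zero hd
    rw [Finset.HasAntidiagonal.mem_antidiagonal] at huv
    rw [← huv, map_add, map_add]
    exact add_le_add
      (m.le_lexp (MvPolynomial.mem_support_iff.mpr (left_ne_zero_of_mul hne)))
      (m.le_lexp (MvPolynomial.mem_support_iff.mpr (right_ne_zero_of_mul hne)))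
  · exact m.le_lexp (MvPolynomial.mem_support_iff.mpr hc)

lemma lexp_sub_leadTerm {f : MvPolynomial σ K} {d : σ →₀ ℕ}
    (hd : d ∈ (f - m.leadTerm f).support) :
    m.toSyn d < m.toSyn (m.lexp f) := by
  classical
  rw [MvPolynomial.mem_support_iff, MvPolynomial.coeff_sub, leadTerm,
    MvPolynomial.coeff_monomial] at hd
  by_cases he : m.lexp f = d
  · rw [if_pos he, he, sub_self] at hd
    exact absurd rfl hd
  · rw [if_neg he, sub_zero] at hd
    exact lt_of_le_of_ne (m.le_lexp (MvPolynomial.mem_support_iff.mpr hd))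
      (fun hh => he (m.toSyn.injective hh).symm)

lemma lexp_add_sup (f g : MvPolynomial σ K) :
    m.toSyn (m.lexp (f + g)) ≤ max (m.toSyn (m.lexp f)) (m.toSyn (m.lexp g)) := by
  apply m.lexp_le
  intro d hd
  rw [MvPolynomial.mem_support_iff, MvPolynomial.coeff_add] at hd
  rcases (by by_contra h; push_neg at h; simp [h.1, h.2] at hd :
      f.coeff d ≠ 0 ∨ g.coeff d ≠ 0) with h | h
  · exact le_max_of_le_left (m.le_lexp (MvPolynomial.mem_support_iff.mpr h))
  · exact le_max_of_le_right (m.le_lexp (MvPolynomial.mem_support_iff.mpr h))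

lemma lexp_sub_sup (f g : MvPolynomial σ K) :
    m.toSyn (m.lexp (f - g)) ≤ max (m.toSyn (m.lexp f)) (m.toSyn (m.lexp g)) := by
  have hneg : m.lexp (-g) = m.lexp g := by
    rw [lexp, lexp, MvPolynomial.support_neg]
  rw [sub_eq_add_neg]
  simpa [hneg] using m.lexp_add_sup f (-g)


lemma key [DecidableEq (MvPolynomial σ K)] (B : Finset (MvPolynomial σ K))
    (hprime : ∀ f ∈ B, ∀ g ∈ B, f ≠ g → ∀ i : σ, m.lexp f i = 0 ∨ m.lexp g i = 0) :
    ∀ (δ : m.syn) (n : ℕ) (h : MvPolynomial σ K → MvPolynomial σ K) (f : MvPolynomial σ K),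
      (∀ g ∈ B, m.toSyn (m.lexp (h g * g)) ≤ δ) →
      (B.filter (fun g => h g * g ≠ 0 ∧ m.toSyn (m.lexp (h g * g)) = δ)).card ≤ n →
      f = ∑ g ∈ B, h g * g → f ≠ 0 →
      ∃ g ∈ B, g ≠ 0 ∧ m.lexp g ≤ m.lexp f := by
  intro δ₀
  refine wellFounded_lt.induction
    (C := fun δ => ∀ (n : ℕ) (h : MvPolynomial σ K → MvPolynomial σ K) (f : MvPolynomial σ K),
      (∀ g ∈ B, m.toSyn (m.lexp (h g * g)) ≤ δ) →
      (B.filter (fun g => h g * g ≠ 0 ∧ m.toSyn (m.lexp (h g * g)) = δ)).card ≤ n →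
      f = ∑ g ∈ B, h g * g → f ≠ 0 →
      ∃ g ∈ B, g ≠ 0 ∧ m.lexp g ≤ m.lexp f) δ₀ ?_
  clear δ₀
  intro δ IHδ n
  induction n using Nat.strong_induction_on with
  | _ n IHn =>
  intro h f hbound hcount hsum hf0
  by_cases hA : ∃ g ∈ B, h g * g ≠ 0 ∧ m.lexp (h g * g) = m.lexp f
  · obtain ⟨g, hgB, hg0, heq⟩ := hA
    have hg : g ≠ 0 := right_ne_zero_of_mul hg0
    have hh : h g ≠ 0 := left_ne_zero_of_mul hg0
    refine ⟨g, hgB, hg, ?_⟩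
    rw [← heq, m.lexp_mul hh hg]
    exact le_add_self
  · push_neg at hA
    have hcf : f.coeff (m.lexp f) ≠ 0 := m.coeff_lexp_ne_zero hf0
    have hex : ∃ g ∈ B, (h g * g).coeff (m.lexp f) ≠ 0 := by
      by_contra hc
      push_neg at hc
      apply hcf
      set d := m.lexp f with hd
      rw [hsum, MvPolynomial.coeff_sum]
      exact Finset.sum_eq_zero hc
    obtain ⟨g₁, hg₁B, hg₁⟩ := hex
    have hg₁0 : h g₁ * g₁ ≠ 0 := fun hz => by simp [hz] at hg₁
    have hle1 : m.toSyn (m.lexp f) ≤ m.toSyn (m.lexp (h g₁ * g₁)) :=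
      m.le_lexp (MvPolynomial.mem_support_iff.mpr hg₁)
    have hlt : m.toSyn (m.lexp f) < δ := by
      rcases (le_trans hle1 (hbound g₁ hg₁B)).lt_or_eq with h' | h'
      · exact h'
      · exfalso
        apply hA g₁ hg₁B hg₁0
        have : m.toSyn (m.lexp (h g₁ * g₁)) = m.toSyn (m.lexp f) :=
          le_antisymm (h' ▸ hbound g₁ hg₁B) hle1
        exact m.toSyn.injective this
    have hδ0 : (0 : m.syn) < δ := lt_of_le_of_lt (by rw [← m.bot_eq_zero]; exact bot_le) hlt
    set T := B.filter (fun g => h g * g ≠ 0 ∧ m.toSyn (m.lexp (h g * g)) = δ) with hT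
    rcases lt_or_ge T.card 2 with hTc | hTc
    · have hcases : T.card = 0 ∨ T.card = 1 := by omega
      rcases hcases with case0 | case1
      · rw [Finset.card_eq_zero] at case0
        have hall : ∀ g ∈ B, m.toSyn (m.lexp (h g * g)) < δ := by
          intro g hgB
          by_cases hz : h g * g = 0
          · rw [hz, lexp_zero, map_zero]
            exact hδ0
          · refine lt_of_le_of_ne (hbound g hgB) ?_
            intro he
            have : g ∈ T := Finset.mem_filter.mpr ⟨hgB, hz, he⟩
            simp [case0] at this
        refine IHδ (B.sup fun g => m.toSyn (m.lexp (h g * g))) ?_ B.card h f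
          (fun g hg => Finset.le_sup (f := fun g => m.toSyn (m.lexp (h g * g))) hg) (Finset.card_filter_le _ _) hsum hf0
        exact (Finset.sup_lt_iff (by rw [m.bot_eq_zero]; exact hδ0)).mpr hall
      · obtain ⟨g₀, hg₀⟩ := Finset.card_eq_one.mp case1
        have hg₀T : g₀ ∈ T := by rw [hg₀]; exact Finset.mem_singleton_self g₀
        obtain ⟨hg₀B, hg₀0, hg₀δ⟩ := Finset.mem_filter.mp hg₀T
        set δ' := m.toSyn.symm δ with hδ'
        have hsynδ' : m.toSyn δ' = δ := m.toSyn.apply_symm_apply δ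
        have hcoeff : f.coeff δ' = (h g₀ * g₀).coeff δ' := by
          rw [hsum, MvPolynomial.coeff_sum]
          have hzero : ∀ g ∈ B, g ∉ T → MvPolynomial.coeff δ' (h g * g) = 0 := by
            intro g hgB hgT
            by_cases hz : h g * g = 0
            · simp [hz]
            · apply m.coeff_eq_zero_of_lt'
              rw [hsynδ']
              exact lt_of_le_of_ne (hbound g hgB)
                (fun he => hgT (Finset.mem_filter.mpr ⟨hgB, hz, he⟩))
          rw [← Finset.sum_subset (Finset.filter_subset _ _) hzero, ← hT, hg₀, Finset.sum_singleton]
        have hne0 : (h g₀ * g₀).coeff δ' ≠ 0 := by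
          have hδeq : δ' = m.lexp (h g₀ * g₀) := m.toSyn.injective (by rw [hsynδ', hg₀δ])
          rw [hδeq]
          exact m.coeff_lexp_ne_zero hg₀0
        exfalso
        have hmem := m.le_lexp (MvPolynomial.mem_support_iff.mpr (hcoeff ▸ hne0))
        rw [hsynδ'] at hmem
        exact absurd hlt (not_lt.mpr hmem)
    · obtain ⟨gi, hgiT, gj, hgjT, hne⟩ := Finset.one_lt_card.mp hTc
      obtain ⟨hgiB, hgi0, hgiδ⟩ := Finset.mem_filter.mp hgiT
      obtain ⟨hgjB, hgj0, hgjδ⟩ := Finset.mem_filter.mp hgjT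
      have hgi : gi ≠ 0 := right_ne_zero_of_mul hgi0
      have hhi : h gi ≠ 0 := left_ne_zero_of_mul hgi0
      have hgj : gj ≠ 0 := right_ne_zero_of_mul hgj0
      have hhj : h gj ≠ 0 := left_ne_zero_of_mul hgj0
      have hdeg : m.lexp (h gi) + m.lexp gi = m.lexp (h gj) + m.lexp gj := by
        rw [← m.lexp_mul hhi hgi, ← m.lexp_mul hhj hgj]
        exact m.toSyn.injective (by rw [hgiδ, hgjδ])
      have hle_ij : m.lexp gj ≤ m.lexp (h gi) := by
        rw [Finsupp.le_def]
        intro s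
        have hds := DFunLike.congr_fun hdeg s
        simp only [Finsupp.add_apply] at hds
        rcases hprime gi hgiB gj hgjB hne s with h0 | h0
        · omega
        · omega
      set b := m.lexp (h gi) - m.lexp gj with hbdef
      have hb : b + m.lexp gj = m.lexp (h gi) := tsub_add_cancel_of_le hle_ij
      have hci0 : (h gi).coeff (m.lexp (h gi)) ≠ 0 := m.coeff_lexp_ne_zero hhi
      have hcj0 : gj.coeff (m.lexp gj) ≠ 0 := m.coeff_lexp_ne_zero hgj
      set q : MvPolynomial σ K :=
        monomial b ((h gi).coeff (m.lexp (h gi)) / gj.coeff (m.lexp gj)) with hq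
      have hq0 : (h gi).coeff (m.lexp (h gi)) / gj.coeff (m.lexp gj) ≠ 0 :=
        div_ne_zero hci0 hcj0
      have hlexpq : m.lexp q = b := m.lexp_monomial hq0
      have hqne : q ≠ 0 := by
        rw [hq, Ne, MvPolynomial.monomial_eq_zero]
        exact hq0
      have hqlt : q * m.leadTerm gj = m.leadTerm (h gi) := by
        rw [leadTerm, leadTerm, hq, MvPolynomial.monomial_mul, hb, div_mul_cancel₀ _ hcj0]
      set h' := Function.update
        (Function.update h gi (h gi - m.leadTerm (h gi) - q * (gj - m.leadTerm gj)))
        gj (h gj + q * gi) with hh'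
      have hh'i : h' gi = h gi - m.leadTerm (h gi) - q * (gj - m.leadTerm gj) := by
        rw [hh', Function.update_of_ne hne, Function.update_self]
      have hh'j : h' gj = h gj + q * gi := by rw [hh', Function.update_self]
      have hh'other : ∀ g, g ≠ gi → g ≠ gj → h' g = h g := by
        intro g h1 h2
        rw [hh', Function.update_of_ne h2, Function.update_of_ne h1]
      have hsubset : ({gi, gj} : Finset (MvPolynomial σ K)) ⊆ B :=
        Finset.insert_subset_iff.mpr ⟨hgiB, Finset.singleton_subset_iff.mpr hgjB⟩
      have hzero : ∀ g ∈ B, g ∉ ({gi, gj} : Finset (MvPolynomial σ K)) →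
          (h' g - h g) * g = 0 := by
        intro g hgB hgns
        have h1 : g ≠ gi ∧ g ≠ gj := by
          simpa [Finset.mem_insert, Finset.mem_singleton, not_or] using hgns
        rw [hh'other g h1.1 h1.2, sub_self, zero_mul]
      have hsum' : f = ∑ g ∈ B, h' g * g := by
        have hsplit : ∑ g ∈ ({gi, gj} : Finset (MvPolynomial σ K)), (h' g - h g) * g = 0 := by
          rw [Finset.sum_pair hne, hh'i, hh'j]
          linear_combination gi * hqlt
        have hkey : ∑ g ∈ B, h' g * g - ∑ g ∈ B, h g * g = 0 := by
          rw [← Finset.sum_sub_distrib]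
          rw [show (∑ g ∈ B, (h' g * g - h g * g)) = ∑ g ∈ B, (h' g - h g) * g from
            Finset.sum_congr rfl fun g _ => by ring]
          rw [← Finset.sum_subset hsubset hzero]
          exact hsplit
        rw [hsum]
        exact (sub_eq_zero.mp hkey).symm
      have hδeq : δ = m.toSyn (m.lexp (h gi)) + m.toSyn (m.lexp gi) := by
        rw [← map_add, ← m.lexp_mul hhi hgi, hgiδ]
      have hlt_i : m.toSyn (m.lexp (h' gi * gi)) < δ := by
        rw [hh'i, show (h gi - m.leadTerm (h gi) - q * (gj - m.leadTerm gj)) * gi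
          = (h gi - m.leadTerm (h gi)) * gi - q * (gj - m.leadTerm gj) * gi from by ring]
        refine lt_of_le_of_lt (m.lexp_sub_sup _ _) (max_lt ?_ ?_)
        · by_cases hz : h gi - m.leadTerm (h gi) = 0
          · rw [hz, zero_mul, lexp_zero, map_zero]
            exact hδ0
          · rw [m.lexp_mul hz hgi, map_add, hδeq]
            exact add_lt_add_left (m.lexp_sub_leadTerm (m.lexp_mem_support hz)) _
        · by_cases hz : gj - m.leadTerm gj = 0
          · rw [hz, mul_zero, zero_mul, lexp_zero, map_zero]
            exact hδ0
          · have hq1 : q * (gj - m.leadTerm gj) ≠ 0 := mul_ne_zero hqne hz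
            rw [m.lexp_mul hq1 hgi, m.lexp_mul hqne hz, hlexpq, map_add, map_add]
            have h2 : m.toSyn (m.lexp (gj - m.leadTerm gj)) < m.toSyn (m.lexp gj) :=
              m.lexp_sub_leadTerm (m.lexp_mem_support hz)
            have hδeq2 : δ = m.toSyn b + m.toSyn (m.lexp gj) + m.toSyn (m.lexp gi) := by
              rw [← map_add, ← map_add, hb, ← m.lexp_mul hhi hgi, hgiδ]
            rw [hδeq2]
            exact add_lt_add_left (add_lt_add_right h2 _) _
      have hle_j : m.toSyn (m.lexp (h' gj * gj)) ≤ δ := by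
        rw [hh'j, add_mul]
        refine le_trans (m.lexp_add_sup _ _) (max_le (hbound gj hgjB) ?_)
        rw [m.lexp_mul (mul_ne_zero hqne hgi) hgj, m.lexp_mul hqne hgi, hlexpq]
        rw [show b + m.lexp gi + m.lexp gj = m.lexp (h gi) + m.lexp gi from by
          rw [add_right_comm, hb]]
        rw [← m.lexp_mul hhi hgi, hgiδ]
      have hbound' : ∀ g ∈ B, m.toSyn (m.lexp (h' g * g)) ≤ δ := by
        intro g hgB
        by_cases h1 : g = gi
        · subst h1; exact le_of_lt hlt_i
        by_cases h2 : g = gj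
        · subst h2; exact hle_j
        · rw [hh'other g h1 h2]
          exact hbound g hgB
      have hsub : B.filter (fun g => h' g * g ≠ 0 ∧ m.toSyn (m.lexp (h' g * g)) = δ)
          ⊆ T.erase gi := by
        intro g hgmem
        obtain ⟨hgB, hgne, hgδ⟩ := Finset.mem_filter.mp hgmem
        rw [Finset.mem_erase]
        by_cases h1 : g = gi
        · exfalso
          subst h1
          exact absurd hgδ (ne_of_lt hlt_i)
        refine ⟨h1, ?_⟩
        by_cases h2 : g = gj
        · subst h2; exact hgjT
        · rw [hh'other g h1 h2] at hgne hgδ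
          exact Finset.mem_filter.mpr ⟨hgB, hgne, hgδ⟩
      have hcard' : (B.filter (fun g => h' g * g ≠ 0 ∧ m.toSyn (m.lexp (h' g * g)) = δ)).card
          ≤ T.card - 1 := by
        refine le_trans (Finset.card_le_card hsub) ?_
        rw [Finset.card_erase_of_mem hgiT]
      exact IHn (T.card - 1) (by omega) h' f hbound' hcard' hsum' hf0

end Field

end MonomialOrder


/-- If the leading monomials of every pair of distinct elements of a finite basis `B`
are relatively prime, then `B` is a Gröbner basis of the ideal it generates. -/
theorem groebner_of_pairwise_relatively_prime_leading_monomials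
    {σ K : Type*} [Field K] (m : MonomialOrder σ)
    (B : Finset (MvPolynomial σ K))
    (hprime : ∀ f ∈ B, ∀ g ∈ B, f ≠ g → ∀ i : σ, m.lexp f i = 0 ∨ m.lexp g i = 0) :
    m.IsGroebnerBasis (Ideal.span (B : Set (MvPolynomial σ K))) (B : Set (MvPolynomial σ K)) := by
  classical
  refine ⟨Ideal.subset_span,
    le_antisymm ?_ (Ideal.span_mono (Set.image_mono Ideal.subset_span))⟩
  rw [Ideal.span_le]
  rintro _ ⟨f, hf, rfl⟩
  by_cases hf0 : f = 0
  · subst hf0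
    have hz : m.leadTerm (0 : MvPolynomial σ K) = 0 := by
      simp [MonomialOrder.leadTerm]
    rw [hz]
    exact Submodule.zero_mem _
  · obtain ⟨h, -, hsum⟩ := Submodule.mem_span_finset.mp hf
    simp only [smul_eq_mul] at hsum
    obtain ⟨g, hgB, hg0, hle⟩ := m.key B hprime
      (B.sup fun g => m.toSyn (m.lexp (h g * g))) B.card h f
      (fun g hg => Finset.le_sup (f := fun g => m.toSyn (m.lexp (h g * g))) hg)
      (Finset.card_filter_le _ _) hsum.symm hf0
    have heq : m.leadTerm f
        = monomial (m.lexp f - m.lexp g)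
            (f.coeff (m.lexp f) / g.coeff (m.lexp g)) * m.leadTerm g := by
      rw [MonomialOrder.leadTerm, MonomialOrder.leadTerm, MvPolynomial.monomial_mul,
        tsub_add_cancel_of_le hle, div_mul_cancel₀ _ (m.coeff_lexp_ne_zero hg0)]
    rw [heq]
    exact Ideal.mul_mem_left _ _ (Ideal.subset_span ⟨g, hgB, rfl⟩)
end

section
/- Let K be a field, I = ⟨f_0, f_1,...,f_s⟩ ⊆ K[y, x_1,...,x_n] with f_1,...,f_s ∈ K[x_1,...,x_n] and f_0 = y + f_0', f_0' ∈ K[x_1,...,x_n]. Fix a monomial order in which y is greater than any monomial in x_1,...,x_n. Then for a subset G ⊆ K[x_1,...,x_n], G is a Gröbner basis of ⟨f_1,...,f_s⟩ if and only if {f_0} ∪ G is a Gröbner basis of I. -/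
open MvPolynomial
open scoped MonomialOrder

section Aux

variable {σ K : Type*} [Field K]

lemma GB.toSyn_lexp {τ : Type*} (m : MonomialOrder τ) (f : MvPolynomial τ K) :
    m.toSyn (m.lexp f) = f.support.sup fun d => m.toSyn d := by
  simp [MonomialOrder.lexp]

lemma GB.le_lexp {τ : Type*} {m : MonomialOrder τ} {f : MvPolynomial τ K} {d : τ →₀ ℕ}
    (hd : d ∈ f.support) : d ≼[m] m.lexp f := by
  rw [GB.toSyn_lexp]
  exact Finset.le_sup (f := fun d => m.toSyn d) hd

lemma GB.lexp_mem_support {τ : Type*} {m : MonomialOrder τ} {f : MvPolynomial τ K}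
    (hf : f ≠ 0) : m.lexp f ∈ f.support := by
  have hne : f.support.Nonempty := support_nonempty.mpr hf
  obtain ⟨d, hd, hsup⟩ := Finset.exists_mem_eq_sup f.support hne fun d => m.toSyn d
  have : m.lexp f = d := by rw [MonomialOrder.lexp, hsup]; exact m.toSyn.symm_apply_apply d
  rwa [this]

lemma GB.lexp_eq_of {τ : Type*} {m : MonomialOrder τ} {f : MvPolynomial τ K} {d : τ →₀ ℕ}
    (hd : d ∈ f.support) (hmax : ∀ u ∈ f.support, u ≼[m] d) : m.lexp f = d := by
  have : f.support.sup (fun u => m.toSyn u) = m.toSyn d :=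
    le_antisymm (Finset.sup_le hmax) (Finset.le_sup (f := fun u => m.toSyn u) hd)
  rw [MonomialOrder.lexp, this]; exact m.toSyn.symm_apply_apply d

lemma GB.leadTerm_zero {τ : Type*} (m : MonomialOrder τ) :
    m.leadTerm (0 : MvPolynomial τ K) = 0 := by
  simp [MonomialOrder.leadTerm]

lemma GB.aux_fix (ψ : MvPolynomial (Option σ) K →ₐ[K] MvPolynomial (Option σ) K)
    (hψ : ∀ i : σ, ψ (X (some i)) = X (some i))
    (p : MvPolynomial (Option σ) K) (hp : ∀ d ∈ p.support, d none = 0) : ψ p = p := by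
  conv_lhs => rw [p.as_sum]
  rw [map_sum]
  conv_rhs => rw [p.as_sum]
  apply Finset.sum_congr rfl
  intro d hd
  rw [monomial_eq, map_mul]
  congr 1
  · exact ψ.commutes' _ |>.trans (by rw [MvPolynomial.algebraMap_eq])
  · rw [map_finsuppProd]
    apply Finsupp.prod_congr
    intro i hi
    rw [map_pow]
    congr 1
    match i with
    | none => exact absurd (Finsupp.mem_support_iff.mp hi) (by simp [hp d hd])
    | some j => exact hψ j

lemma GB.yfree_rename (q : MvPolynomial σ K) :
    ∀ d ∈ (rename (some : σ → Option σ) q).support, d none = 0 := by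
  classical
  intro d hd
  rw [MvPolynomial.support_rename_of_injective (Option.some_injective σ)] at hd
  obtain ⟨u, _, rfl⟩ := Finset.mem_image.mp hd
  exact Finsupp.mapDomain_notin_range _ _ (by simp)

lemma GB.rename_killCompl_eq (p : MvPolynomial (Option σ) K)
    (hp : ∀ d ∈ p.support, d none = 0) :
    rename (some : σ → Option σ) (killCompl (Option.some_injective σ) p) = p := by
  have hX : ∀ i : σ,
      killCompl (Option.some_injective σ) ((X (some i)) : MvPolynomial (Option σ) K) = X i := by
    intro i
    have := killCompl_rename_app (Option.some_injective σ) (X i : MvPolynomial σ K)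
    rwa [rename_X] at this
  have := GB.aux_fix ((rename (some : σ → Option σ)).comp (killCompl (Option.some_injective σ)))
    (fun i => by simp [hX i]) p hp
  simpa using this

lemma GB.mapDomain_finsuppSome (d : Option σ →₀ ℕ) (hd : d none = 0) :
    Finsupp.mapDomain some d.some = d := by
  ext a
  match a with
  | none => rw [Finsupp.mapDomain_notin_range _ _ (by simp), hd]
  | some b => rw [Finsupp.mapDomain_apply (Option.some_injective σ), Finsupp.some_apply]

lemma GB.mapDomain_add_single_eq_iff (u : σ →₀ ℕ) (k : ℕ) (d : Option σ →₀ ℕ) :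
    Finsupp.mapDomain some u + Finsupp.single none k = d ↔ k = d none ∧ u = d.some := by
  constructor
  · rintro rfl
    constructor
    · simp [Finsupp.mapDomain_notin_range _ _ (show (none : Option σ) ∉ Set.range some by simp)]
    · ext a
      simp [Finsupp.mapDomain_apply (Option.some_injective σ)]
  · rintro ⟨rfl, rfl⟩
    ext a
    match a with
    | none =>
      simp [Finsupp.mapDomain_notin_range _ _ (show (none : Option σ) ∉ Set.range some by simp)]
    | some b => simp [Finsupp.mapDomain_apply (Option.some_injective σ)]

lemma GB.optionEquivLeft_monomial (d : Option σ →₀ ℕ) (c : K) :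
    optionEquivLeft K σ (monomial d c) =
      Polynomial.C (monomial d.some c) * Polynomial.X ^ (d none) := by
  rw [optionEquivLeft_apply, aeval_monomial, Finsupp.prod_option_index]
  · have h1 : Polynomial.C (d.some.prod fun a k => (X a : MvPolynomial σ K) ^ k) =
        (d.some.prod fun a k => (Polynomial.C (X a : MvPolynomial σ K)) ^ k) := by
      rw [map_finsuppProd]
      exact Finsupp.prod_congr fun a _ => map_pow _ _ _
    simp only [Option.elim]
    rw [← h1, monomial_eq]
    rw [show (algebraMap K (Polynomial (MvPolynomial σ K))) c = Polynomial.C (C c) by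
      rw [Polynomial.algebraMap_apply, MvPolynomial.algebraMap_eq]]
    rw [map_mul]
    ring
  · intro a; simp
  · intro a m1 m2; simp [pow_add]

lemma GB.optionEquivLeft_coeff_coeff (u : σ →₀ ℕ) (p : MvPolynomial (Option σ) K) (k : ℕ) :
    coeff u ((optionEquivLeft K σ p).coeff k) =
      coeff (Finsupp.mapDomain some u + Finsupp.single none k) p := by
  classical
  induction p using MvPolynomial.induction_on' with
  | monomial d c =>
    rw [GB.optionEquivLeft_monomial, Polynomial.coeff_C_mul, Polynomial.coeff_X_pow,
      coeff_monomial]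
    by_cases hk : k = d none
    · rw [if_pos hk, mul_one, coeff_monomial]
      by_cases hu : d.some = u
      · rw [if_pos hu, if_pos]
        exact ((GB.mapDomain_add_single_eq_iff u k d).mpr ⟨hk, hu.symm⟩).symm
      · rw [if_neg hu, if_neg]
        intro hd
        exact hu (((GB.mapDomain_add_single_eq_iff u k d).mp hd.symm).2.symm)
    · rw [if_neg hk, mul_zero, coeff_zero, if_neg]
      intro hd
      exact hk ((GB.mapDomain_add_single_eq_iff u k d).mp hd.symm).1
  | add p q hp hq => rw [map_add, Polynomial.coeff_add, coeff_add, hp, hq, coeff_add]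

lemma GB.optionEquivLeft_rename (q : MvPolynomial σ K) :
    optionEquivLeft K σ (rename (some : σ → Option σ) q) = Polynomial.C q := by
  have : (optionEquivLeft K σ).toAlgHom.comp (rename (some : σ → Option σ)) =
      Polynomial.CAlgHom := by
    apply MvPolynomial.algHom_ext
    intro i
    simp [optionEquivLeft_X_some, Polynomial.CAlgHom]
  exact congrFun (congrArg (fun h => h.toFun) this) q

/-- extraction of the coefficient of `y^k`, as a `y`-free polynomial -/
noncomputable def GB.compY (k : ℕ) (p : MvPolynomial (Option σ) K) : MvPolynomial (Option σ) K :=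
  rename (some : σ → Option σ) ((optionEquivLeft K σ p).coeff k)

lemma GB.yfree_compY (k : ℕ) (p : MvPolynomial (Option σ) K) :
    ∀ d ∈ (GB.compY k p).support, d none = 0 := GB.yfree_rename _

lemma GB.coeff_compY (k : ℕ) (p : MvPolynomial (Option σ) K) (u : Option σ →₀ ℕ)
    (hu : u none = 0) :
    coeff u (GB.compY k p) = coeff (u + Finsupp.single none k) p := by
  have h : u = Finsupp.mapDomain some u.some := (GB.mapDomain_finsuppSome u hu).symm
  rw [GB.compY]
  conv_lhs => rw [h]
  rw [coeff_rename_mapDomain _ (Option.some_injective σ), GB.optionEquivLeft_coeff_coeff, ← h]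

lemma GB.compY_mem_span {s : ℕ} {f : Fin s → MvPolynomial (Option σ) K}
    (hf : ∀ i, ∀ d ∈ (f i).support, d none = 0)
    {p : MvPolynomial (Option σ) K} (hp : p ∈ Ideal.span (Set.range f)) (k : ℕ) :
    GB.compY k p ∈ Ideal.span (Set.range f) := by
  set fσ : Fin s → MvPolynomial σ K := fun i => killCompl (Option.some_injective σ) (f i) with hfσ
  have hfi : ∀ i, rename (some : σ → Option σ) (fσ i) = f i :=
    fun i => GB.rename_killCompl_eq (f i) (hf i)
  have h1 : optionEquivLeft K σ p ∈
      Ideal.map (Polynomial.C : MvPolynomial σ K →+* Polynomial (MvPolynomial σ K))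
        (Ideal.span (Set.range fσ)) := by
    have := Ideal.mem_map_of_mem ((optionEquivLeft K σ).toAlgHom.toRingHom) hp
    rw [Ideal.map_span] at this
    refine Ideal.span_le.mpr ?_ this
    rintro - ⟨-, ⟨i, rfl⟩, rfl⟩
    have h2 : (optionEquivLeft K σ) (f i) = Polynomial.C (fσ i) := by
      rw [← hfi i, GB.optionEquivLeft_rename]
    rw [Ideal.map_span]
    simp only [AlgEquiv.toAlgHom_eq_coe, AlgHom.toRingHom_eq_coe, RingHom.coe_coe,
      AlgHom.coe_coe, SetLike.mem_coe]
    erw [h2]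
    exact Ideal.subset_span ⟨fσ i, ⟨i, rfl⟩, rfl⟩
  have h2 : (optionEquivLeft K σ p).coeff k ∈ Ideal.span (Set.range fσ) :=
    Ideal.mem_map_C_iff.mp h1 k
  have h3 := Ideal.mem_map_of_mem
    ((rename (some : σ → Option σ)).toRingHom :
        MvPolynomial σ K →+* MvPolynomial (Option σ) K) h2
  rw [Ideal.map_span] at h3
  refine Ideal.span_le.mpr ?_ h3
  rintro - ⟨-, ⟨i, rfl⟩, rfl⟩
  simp only [AlgHom.toRingHom_eq_coe, RingHom.coe_coe, SetLike.mem_coe]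
  rw [hfi i]
  exact Ideal.subset_span ⟨i, rfl⟩

lemma GB.elim_mem {s : ℕ} {f : Fin s → MvPolynomial (Option σ) K}
    {f₀' : MvPolynomial (Option σ) K}
    (hf : ∀ i, ∀ d ∈ (f i).support, d none = 0)
    (hf₀' : ∀ d ∈ f₀'.support, d none = 0)
    {p : MvPolynomial (Option σ) K} (hp : ∀ d ∈ p.support, d none = 0)
    (hpI : p ∈ Ideal.span ({X none + f₀'} ∪ Set.range f)) :
    p ∈ Ideal.span (Set.range f) := by
  set φ : MvPolynomial (Option σ) K →ₐ[K] MvPolynomial (Option σ) K :=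
    aeval (fun o => Option.elim o (-f₀') (fun i => X (some i))) with hφ
  have hφX : ∀ i : σ, φ (X (some i)) = X (some i) := fun i => by simp [hφ]
  have hfix : ∀ q, (∀ d ∈ q.support, d none = 0) → φ q = q := GB.aux_fix φ hφX
  have hp' : φ p = p := hfix p hp
  have := Ideal.mem_map_of_mem (φ.toRingHom :
    MvPolynomial (Option σ) K →+* MvPolynomial (Option σ) K) hpI
  rw [Ideal.map_span] at this
  simp only [AlgHom.toRingHom_eq_coe, RingHom.coe_coe] at this
  rw [hp'] at this
  refine Ideal.span_le.mpr ?_ this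
  rintro - ⟨q, hq, rfl⟩
  simp only [AlgHom.toRingHom_eq_coe, RingHom.coe_coe, SetLike.mem_coe]
  rcases hq with rfl | ⟨i, rfl⟩
  · have : φ (X none + f₀') = 0 := by
      rw [map_add, hfix f₀' hf₀']
      simp [hφ]
    rw [this]
    exact Ideal.zero_mem _
  · rw [hfix (f i) (hf i)]
    exact Ideal.subset_span ⟨i, rfl⟩

lemma GB.span_insert_y {T : Set (MvPolynomial (Option σ) K)}
    (hT : ∀ t ∈ T, ∀ d ∈ t.support, d none = 0)
    {q : MvPolynomial (Option σ) K} (hq : ∀ d ∈ q.support, d none = 0)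
    (h : q ∈ Ideal.span ({X none} ∪ T)) : q ∈ Ideal.span T := by
  set φ : MvPolynomial (Option σ) K →ₐ[K] MvPolynomial (Option σ) K :=
    aeval (fun o => Option.elim o 0 (fun i => X (some i))) with hφ
  have hφX : ∀ i : σ, φ (X (some i)) = X (some i) := fun i => by simp [hφ]
  have hfix : ∀ r, (∀ d ∈ r.support, d none = 0) → φ r = r := GB.aux_fix φ hφX
  have hq' : φ q = q := hfix q hq
  have := Ideal.mem_map_of_mem (φ.toRingHom :
    MvPolynomial (Option σ) K →+* MvPolynomial (Option σ) K) h
  rw [Ideal.map_span] at this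
  simp only [AlgHom.toRingHom_eq_coe, RingHom.coe_coe] at this
  rw [hq'] at this
  refine Ideal.span_le.mpr ?_ this
  rintro - ⟨t, ht, rfl⟩
  simp only [AlgHom.toRingHom_eq_coe, RingHom.coe_coe, SetLike.mem_coe]
  rcases ht with rfl | ht
  · have : φ (X none) = 0 := by simp [hφ]
    rw [this]
    exact Ideal.zero_mem _
  · rw [hfix t (hT t ht)]
    exact Ideal.subset_span ht

lemma GB.leadTerm_decompY (m : MonomialOrder (Option σ)) {p : MvPolynomial (Option σ) K}
    (hp : p ≠ 0) :
    GB.compY (m.lexp p none) p ≠ 0 ∧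
      m.leadTerm p = X none ^ (m.lexp p none) * m.leadTerm (GB.compY (m.lexp p none) p) := by
  set Kp := m.lexp p none with hKp
  set q := GB.compY Kp p with hq
  set D : Option σ →₀ ℕ := (m.lexp p).erase none with hD
  have hD0 : D none = 0 := Finsupp.erase_same
  have hDadd : D + Finsupp.single none Kp = m.lexp p := by
    ext a
    match a with
    | none => simp [hD, Finsupp.erase_same, hKp]
    | some b => simp [hD, Finsupp.erase_ne]
  have hcoeffD : coeff D q = coeff (m.lexp p) p := by
    rw [hq, GB.coeff_compY _ _ _ hD0, hDadd]
  have hlexp_ne : coeff (m.lexp p) p ≠ 0 := mem_support_iff.mp (GB.lexp_mem_support hp)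
  have hDsupp : D ∈ q.support := mem_support_iff.mpr (by rw [hcoeffD]; exact hlexp_ne)
  have hq0 : q ≠ 0 := fun h => by simp [h] at hDsupp
  have hlexpq : m.lexp q = D := by
    apply GB.lexp_eq_of hDsupp
    intro u hu
    have hu0 : u none = 0 := GB.yfree_compY Kp p u hu
    have hmem : u + Finsupp.single none Kp ∈ p.support := by
      rw [mem_support_iff] at hu ⊢
      rwa [hq, GB.coeff_compY _ _ _ hu0] at hu
    have h1 := GB.le_lexp (m := m) hmem
    rw [← hDadd, map_add, map_add] at h1
    exact le_of_add_le_add_right h1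
  refine ⟨hq0, ?_⟩
  rw [MonomialOrder.leadTerm, MonomialOrder.leadTerm, hlexpq, X_pow_eq_monomial, monomial_mul,
    one_mul]
  rw [show q.coeff D = p.coeff (m.lexp p) from hcoeffD,
    show Finsupp.single (none : Option σ) Kp + D = m.lexp p from by rw [add_comm]; exact hDadd]

lemma GB.yfree_of_lexp_none {m : MonomialOrder (Option σ)}
    (horder : ∀ a : Option σ →₀ ℕ, a none = 0 → a ≺[m] Finsupp.single (none : Option σ) 1)
    {p : MvPolynomial (Option σ) K} (h0 : (m.lexp p) none = 0) :
    ∀ d ∈ p.support, d none = 0 := by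
  intro d hd
  by_contra hdn
  have h1 : Finsupp.single (none : Option σ) 1 ≤ d :=
    Finsupp.single_le_iff.mpr (Nat.one_le_iff_ne_zero.mpr hdn)
  have h2 : Finsupp.single (none : Option σ) 1 ≼[m] d := m.toSyn_monotone h1
  have h3 := GB.le_lexp (m := m) hd
  have h4 := horder (m.lexp p) h0
  exact (h2.trans h3).not_gt h4

lemma GB.yfree_leadTerm {m : MonomialOrder (Option σ)} {p : MvPolynomial (Option σ) K}
    (hp : ∀ d ∈ p.support, d none = 0) :
    ∀ d ∈ (m.leadTerm p).support, d none = 0 := by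
  intro d hd
  rw [MonomialOrder.leadTerm] at hd
  have h1 := support_monomial_subset hd
  rw [Finset.mem_singleton] at h1
  subst h1
  have hc : p.coeff (m.lexp p) ≠ 0 := by
    intro h
    rw [h, monomial_zero] at hd
    simp at hd
  exact hp _ (mem_support_iff.mpr hc)

end Aux

/-- Lemma 2.1, second part.  The polynomial ring is `K[y, x₁, …]`, modelled as
`MvPolynomial (Option σ) K` with `y = X none`.  With `I = ⟨f₀, f₁, …, f_s⟩`,
`f₀ = y + f₀'`, all `fᵢ` and `f₀'` not involving `y`, and a monomial order in which `y`
is greater than every monomial in the `x`-variables: a subset `G` of `K[x]` is a Gröbner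
basis of `⟨f₁,…,f_s⟩` if and only if `{f₀} ∪ G` is a Gröbner basis of `I`. -/
theorem groebner_iff_groebner_insert_linear_variable
    {σ K : Type*} [Field K] (m : MonomialOrder (Option σ)) {s : ℕ}
    (f : Fin s → MvPolynomial (Option σ) K) (f₀' : MvPolynomial (Option σ) K)
    (hf : ∀ i, ∀ d ∈ (f i).support, d none = 0)
    (hf₀' : ∀ d ∈ f₀'.support, d none = 0)
    (horder : ∀ a : Option σ →₀ ℕ, a none = 0 → a ≺[m] Finsupp.single (none : Option σ) 1)
    (f₀ : MvPolynomial (Option σ) K) (hf₀ : f₀ = X none + f₀')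
    (I : Ideal (MvPolynomial (Option σ) K))
    (hI : I = Ideal.span ({f₀} ∪ Set.range f))
    (G : Set (MvPolynomial (Option σ) K))
    (hG : ∀ g ∈ G, ∀ d ∈ g.support, d none = 0) :
    m.IsGroebnerBasis (Ideal.span (Set.range f)) G ↔
      m.IsGroebnerBasis I ({f₀} ∪ G) := by
  classical
  subst hf₀ hI
  set J : Ideal (MvPolynomial (Option σ) K) := Ideal.span (Set.range f) with hJ
  set I : Ideal (MvPolynomial (Option σ) K) :=
    Ideal.span ({X none + f₀'} ∪ Set.range f) with hI
  have hJI : J ≤ I := Ideal.span_mono Set.subset_union_right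
  have hf₀I : (X none + f₀' : MvPolynomial (Option σ) K) ∈ I :=
    Ideal.subset_span (Or.inl rfl)
  -- the leading term of f₀ is X none
  have hcoeff₀ : coeff (Finsupp.single (none : Option σ) 1) (X none + f₀' :
      MvPolynomial (Option σ) K) = 1 := by
    rw [coeff_add, coeff_X]
    have : coeff (Finsupp.single (none : Option σ) 1) f₀' = 0 := by
      by_contra h
      have := hf₀' _ (mem_support_iff.mpr h)
      simp at this
    rw [this, add_zero, if_pos rfl]
  have hf₀0 : (X none + f₀' : MvPolynomial (Option σ) K) ≠ 0 := fun h => by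
    rw [h] at hcoeff₀; simp at hcoeff₀
  have hlexpf₀ : m.lexp (X none + f₀' : MvPolynomial (Option σ) K) =
      Finsupp.single none 1 := by
    apply GB.lexp_eq_of (mem_support_iff.mpr (by rw [hcoeff₀]; exact one_ne_zero))
    intro u hu
    have := support_add hu
    rw [Finset.mem_union] at this
    rcases this with h | h
    · rw [support_X, Finset.mem_singleton] at h
      rw [h]
    · exact (horder u (hf₀' u h)).le
  have hLTf₀ : m.leadTerm (X none + f₀' : MvPolynomial (Option σ) K) = X none := by
    rw [MonomialOrder.leadTerm, hlexpf₀, hcoeff₀, X]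
  -- the span of lead terms of I
  have hS1 : Ideal.span (m.leadTerm '' (I : Set (MvPolynomial (Option σ) K))) =
      Ideal.span ({X none} ∪ m.leadTerm '' (J : Set (MvPolynomial (Option σ) K))) := by
    apply le_antisymm
    · rw [Ideal.span_le]
      rintro - ⟨p, hpI, rfl⟩
      by_cases hp0 : p = 0
      · rw [hp0, GB.leadTerm_zero]
        exact Ideal.zero_mem _
      by_cases hK : (m.lexp p) none = 0
      · have hyf := GB.yfree_of_lexp_none horder hK
        have hpJ : p ∈ J := GB.elim_mem hf hf₀' hyf hpI
        exact Ideal.subset_span (Or.inr ⟨p, hpJ, rfl⟩)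
      · obtain ⟨hq0, hLT⟩ := GB.leadTerm_decompY m hp0
        rw [hLT]
        have hXmem : (X none : MvPolynomial (Option σ) K) ∈
            Ideal.span ({X none} ∪ m.leadTerm '' (J : Set (MvPolynomial (Option σ) K))) :=
          Ideal.subset_span (Or.inl rfl)
        obtain ⟨n, hn⟩ : ∃ n, (m.lexp p) none = n + 1 := ⟨(m.lexp p) none - 1, by omega⟩
        rw [hn, pow_succ, mul_assoc]
        exact Ideal.mul_mem_left _ _ (Ideal.mul_mem_right _ _ hXmem)
    · rw [Ideal.span_le]
      rintro - (rfl | ⟨p, hpJ, rfl⟩)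
      · rw [← hLTf₀]
        exact Ideal.subset_span ⟨_, hf₀I, rfl⟩
      · exact Ideal.subset_span ⟨p, hJI hpJ, rfl⟩
  constructor
  · rintro ⟨hGJ, hspan⟩
    constructor
    · rintro p (rfl | hp)
      · exact hf₀I
      · exact hJI (hGJ hp)
    · rw [hS1, Set.image_union, Set.image_singleton, hLTf₀, Ideal.span_union, hspan,
        ← Ideal.span_union]
  · rintro ⟨hGI, hspan⟩
    rw [Set.image_union, Set.image_singleton, hLTf₀] at hspan
    have hGJ : G ⊆ (J : Set (MvPolynomial (Option σ) K)) :=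
      fun g hg => GB.elim_mem hf hf₀' (hG g hg) (hGI (Or.inr hg))
    refine ⟨hGJ, ?_⟩
    have hTfree : ∀ t ∈ m.leadTerm '' G, ∀ d ∈ t.support, d none = 0 := by
      rintro - ⟨g, hg, rfl⟩
      exact GB.yfree_leadTerm (hG g hg)
    apply le_antisymm
    · rw [Ideal.span_le]
      rintro - ⟨p, hpJ, rfl⟩
      by_cases hp0 : p = 0
      · rw [hp0, GB.leadTerm_zero]
        exact Ideal.zero_mem _
      obtain ⟨hq0, hLT⟩ := GB.leadTerm_decompY m hp0
      set q := GB.compY (m.lexp p none) p with hqdef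
      have hqJ : q ∈ J := GB.compY_mem_span hf hpJ _
      have hLTq_mem : m.leadTerm q ∈
          Ideal.span ({X none} ∪ m.leadTerm '' G) := by
        rw [← hspan]
        exact Ideal.subset_span ⟨q, hJI hqJ, rfl⟩
      have hLTq : m.leadTerm q ∈ Ideal.span (m.leadTerm '' G) :=
        GB.span_insert_y hTfree (GB.yfree_leadTerm (GB.yfree_compY _ _)) hLTq_mem
      rw [hLT]
      exact Ideal.mul_mem_left _ _ hLTq
    · exact Ideal.span_mono (Set.image_mono hGJ)
end

section
/- Let I ⊆ K[y_1,...,y_m, x_1,...,x_n] be the ideal generated by polynomials g_1,...,g_s ∈ K[x] together with H_i = y_i − h_i, h_i ∈ K[x], for i = 1,...,m. Let G be the reduced Gröbner basis of J = ⟨g_1,...,g_s⟩ ⊆ K[x] with respect to some monomial order. Then I is a binomial ideal if and only if J is a binomial ideal and for every i = 1,...,m the remainder Rem(h_i, G) has at most one term. -/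
open MvPolynomial
open scoped MonomialOrder
open scoped Pointwise

def MonomialOrder.IsReducedGroebnerBasis {σ : Type*} (m : MonomialOrder σ) {K : Type*}
    [Field K] (I : Ideal (MvPolynomial σ K)) (G : Set (MvPolynomial σ K)) : Prop :=
  m.IsGroebnerBasis I G ∧ (∀ g ∈ G, g.coeff (m.lexp g) = 1) ∧
    ∀ g ∈ G, ∀ d ∈ g.support, ∀ g' ∈ G, g' ≠ g → ¬ m.lexp g' ≤ d

def MonomialOrder.IsRemainder {σ : Type*} (m : MonomialOrder σ) {K : Type*} [Field K]
    (p : MvPolynomial σ K) (G : Set (MvPolynomial σ K)) (r : MvPolynomial σ K) : Prop :=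
  p - r ∈ Ideal.span G ∧ ∀ d ∈ r.support, ∀ g ∈ G, g ≠ 0 → ¬ m.lexp g ≤ d

/-- An ideal is binomial if it admits a generating set consisting of polynomials with at
most two terms. -/
def IsBinomialIdeal {σ : Type*} {K : Type*} [Field K] (I : Ideal (MvPolynomial σ K)) : Prop :=
  ∃ B : Set (MvPolynomial σ K), I = Ideal.span B ∧ ∀ f ∈ B, f.support.card ≤ 2

namespace BinAux

variable {σ K : Type*} [CommSemiring K]

lemma card_support_le_one_iff (p : MvPolynomial σ K) :
    p.support.card ≤ 1 ↔ ∃ d c, p = monomial d c := by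
  classical
  constructor
  · intro hp
    rcases Finset.card_le_one_iff_subset_singleton.mp hp with ⟨d, hd⟩
    refine ⟨d, p.coeff d, ?_⟩
    ext e
    rw [coeff_monomial]
    split_ifs with h
    · subst h; rfl
    · by_contra hc
      have : e ∈ p.support := by simpa [mem_support_iff] using hc
      have := hd this
      simp at this
      exact h this.symm
  · rintro ⟨d, c, rfl⟩
    rw [support_monomial]
    split_ifs <;> simp

lemma card_support_mul_le_one {p q : MvPolynomial σ K}
    (hp : p.support.card ≤ 1) (hq : q.support.card ≤ 1) : (p * q).support.card ≤ 1 := by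
  rcases (card_support_le_one_iff p).mp hp with ⟨d, c, rfl⟩
  rcases (card_support_le_one_iff q).mp hq with ⟨e, b, rfl⟩
  rw [monomial_mul]
  exact (card_support_le_one_iff _).mpr ⟨_, _, rfl⟩

lemma card_support_sum_le {α : Type*} (s : Finset α) (f : α → MvPolynomial σ K) :
    (∑ i ∈ s, f i).support.card ≤ ∑ i ∈ s, (f i).support.card := by
  classical
  induction s using Finset.induction_on with
  | empty => simp
  | insert _ _ hx ih =>
    rename_i a s
    rw [Finset.sum_insert hx, Finset.sum_insert hx]
    refine le_trans (Finset.card_le_card (support_add)) ?_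
    exact le_trans (Finset.card_union_le _ _) (by omega)

lemma card_support_aeval_le {τ : Type*} (φ : σ → MvPolynomial τ K)
    (hφ : ∀ i, (φ i).support.card ≤ 1) (p : MvPolynomial σ K) :
    ((aeval φ p : MvPolynomial τ K)).support.card ≤ p.support.card := by
  classical
  conv_lhs => rw [p.as_sum]
  rw [map_sum]
  refine le_trans (card_support_sum_le _ _) ?_
  have : ∀ d ∈ p.support, ((aeval φ) (monomial d (coeff d p))).support.card ≤ 1 := by
    intro d _
    rw [aeval_monomial]
    refine card_support_mul_le_one ?_ ?_
    · exact (card_support_le_one_iff _).mpr ⟨0, _, by rw [monomial_zero']; rfl⟩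
    · refine Finset.prod_induction _ (fun x : MvPolynomial τ K => x.support.card ≤ 1) (fun a b ha hb => card_support_mul_le_one ha hb) ?_ ?_
      · exact (card_support_le_one_iff _).mpr ⟨0, 1, by simp⟩
      · intro i _
        induction (d i) with
        | zero => simp only []; simpa using (card_support_le_one_iff _).mpr ⟨0, 1, by simp⟩
        | succ k ih => simp only [] at ih ⊢; rw [pow_succ]; exact card_support_mul_le_one ih (hφ i)
  calc ∑ d ∈ p.support, ((aeval φ) (monomial d (coeff d p))).support.card
      ≤ ∑ d ∈ p.support, 1 := Finset.sum_le_sum this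
    _ = p.support.card := by simp

end BinAux
namespace BinAux

variable {σ K : Type*} [CommSemiring K]

lemma card_support_monomial_mul (d : σ →₀ ℕ) (p : MvPolynomial σ K) :
    ((monomial d (1:K)) * p).support.card ≤ p.support.card := by
  classical
  have h1 : ((monomial d (1:K)) * p).support ⊆ (monomial d (1:K)).support + p.support :=
    support_mul _ _
  have h2 : (monomial d (1:K)).support ⊆ {d} := support_monomial_subset
  have h3 : ((monomial d (1:K)) * p).support ⊆ ({d} : Finset (σ →₀ ℕ)) + p.support :=
    h1.trans (Finset.add_subset_add_right h2)
  have h4 : ({d} : Finset (σ →₀ ℕ)) + p.support = p.support.image (d + ·) := by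
    rw [Finset.singleton_add]; ext x; simp [Finset.mem_vadd_finset, vadd_eq_add]
  refine le_trans (Finset.card_le_card (h4 ▸ h3)) ?_
  exact Finset.card_image_le

/-- Every element of an ideal span is a `K`-linear combination of monomial multiples
of the generators. -/
lemma mem_span_monomial_mul {B : Set (MvPolynomial σ K)} {f : MvPolynomial σ K}
    (hf : f ∈ Ideal.span B) :
    f ∈ Submodule.span K {v : MvPolynomial σ K | ∃ d, ∃ b ∈ B, v = monomial d 1 * b} := by
  classical
  set M := Submodule.span K {v : MvPolynomial σ K | ∃ d, ∃ b ∈ B, v = monomial d 1 * b} with hM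
  have hmul : ∀ p : MvPolynomial σ K, ∀ x ∈ M, p * x ∈ M := by
    intro p x hx
    induction hx using Submodule.span_induction with
    | mem v hv =>
      obtain ⟨d, b, hb, rfl⟩ := hv
      rw [show p * ((monomial d) 1 * b) = (∑ e ∈ p.support, monomial e (coeff e p)) * ((monomial d) 1 * b) by rw [← p.as_sum]]
      rw [Finset.sum_mul]
      refine Submodule.sum_mem _ ?_
      intro e _
      have : monomial e (coeff e p) * (monomial d 1 * b)
          = (coeff e p) • (monomial (e + d) 1 * b) := by
        rw [smul_eq_C_mul, ← mul_assoc, ← mul_assoc, C_mul_monomial, monomial_mul]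
      rw [this]
      exact Submodule.smul_mem _ _ (Submodule.subset_span ⟨e + d, b, hb, rfl⟩)
    | zero => simp only [mul_zero]; exact Submodule.zero_mem M
    | add x y _ _ hx hy => rw [mul_add]; exact Submodule.add_mem _ hx hy
    | smul c x _ hx => rw [mul_smul_comm]; exact Submodule.smul_mem _ _ hx
  induction hf using Submodule.span_induction with
  | mem b hb =>
    have : b = monomial 0 1 * b := by simp
    rw [this]; exact Submodule.subset_span ⟨0, b, hb, rfl⟩
  | zero => exact Submodule.zero_mem M
  | add x y _ _ hx hy => exact Submodule.add_mem _ hx hy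
  | smul p x _ hx => exact hmul p x hx

end BinAux
namespace BinAux

variable {σ K : Type*} [Field K]

lemma key [DecidableEq (σ →₀ ℕ)] (V : Submodule K (MvPolynomial σ K)) (f : MvPolynomial σ K) :
    ∀ (N : ℕ) (T : Finset (σ →₀ ℕ)) {k : ℕ} (b : Fin k → MvPolynomial σ K),
      (T \ f.support).card ≤ N →
      (∀ i, b i ∈ V) → (∀ i, (b i).support.card ≤ 2) → (∀ i, (b i).support ⊆ T) →
      f ∈ Submodule.span K (Set.range b) →
      f ∈ Submodule.span K
        {v | v ∈ V ∧ v.support.card ≤ 2 ∧ v.support ⊆ f.support} := by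
  classical
  have base : ∀ {k : ℕ} (b : Fin k → MvPolynomial σ K),
      (∀ i, b i ∈ V) → (∀ i, (b i).support.card ≤ 2) → (∀ i, (b i).support ⊆ f.support) →
      f ∈ Submodule.span K (Set.range b) →
      f ∈ Submodule.span K {v | v ∈ V ∧ v.support.card ≤ 2 ∧ v.support ⊆ f.support} := by
    intro k b hV hcard hsupp hf
    refine Submodule.span_le.mpr ?_ hf
    rintro v ⟨i, rfl⟩
    exact Submodule.subset_span ⟨hV i, hcard i, hsupp i⟩
  intro N
  induction N with
  | zero =>
    intro T k b hN hV hcard hsupp hf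
    have hT : T ⊆ f.support := by
      rw [← Finset.sdiff_eq_empty_iff_subset]
      exact Finset.card_eq_zero.mp (Nat.le_zero.mp hN)
    exact base b hV hcard (fun i => (hsupp i).trans hT) hf
  | succ N ih =>
    intro T k b hN hV hcard hsupp hf
    by_cases hTf : T \ f.support = ∅
    · exact base b hV hcard
        (fun i => (hsupp i).trans (Finset.sdiff_eq_empty_iff_subset.mp hTf)) hf
    · obtain ⟨τ, hτ⟩ := Finset.nonempty_iff_ne_empty.mpr hTf
      obtain ⟨hτT, hτf⟩ := Finset.mem_sdiff.mp hτ
      have hmeas : (T.erase τ \ f.support).card ≤ N := by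
        rw [Finset.erase_sdiff_comm, Finset.card_erase_of_mem hτ]
        omega
      by_cases hc : ∀ i, coeff τ (b i) = 0
      · refine ih (T.erase τ) b hmeas hV hcard ?_ hf
        intro i
        refine Finset.subset_erase.mpr ⟨hsupp i, ?_⟩
        simpa [mem_support_iff] using hc i
      · push_neg at hc
        obtain ⟨i₀, hi₀⟩ := hc
        set c := coeff τ (b i₀) with hcdef
        set b' : Fin k → MvPolynomial σ K :=
          fun i => b i - (coeff τ (b i) / c) • b i₀ with hb'
        have hτb' : ∀ i, coeff τ (b' i) = 0 := by
          intro i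
          simp only [hb', coeff_sub, coeff_smul, smul_eq_mul]
          rw [div_mul_cancel₀ _ hi₀, sub_self]
        have hV' : ∀ i, b' i ∈ V :=
          fun i => sub_mem (hV i) (Submodule.smul_mem _ _ (hV i₀))
        have hss : ∀ i, ∀ d ∈ (b' i).support, d ∈ (b i).support ∨ d ∈ (b i₀).support := by
          intro i d hd
          by_contra hcon
          push_neg at hcon
          rw [mem_support_iff] at hd
          refine hd ?_
          have h1 : coeff d (b i) = 0 := by
            simpa [mem_support_iff, not_not] using hcon.1
          have h2 : coeff d (b i₀) = 0 := by
            simpa [mem_support_iff, not_not] using hcon.2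
          simp [hb', coeff_sub, coeff_smul, h1, h2]
        have hsupp' : ∀ i, (b' i).support ⊆ T.erase τ := by
          intro i
          intro d hd
          refine Finset.mem_erase.mpr ⟨?_, ?_⟩
          · rintro rfl
            exact (mem_support_iff.mp hd) (hτb' i)
          · rcases hss i d hd with h | h
            · exact hsupp i h
            · exact hsupp i₀ h
        have hcard' : ∀ i, (b' i).support.card ≤ 2 := by
          intro i
          by_cases h : coeff τ (b i) = 0
          · have : b' i = b i := by simp [hb', h]
            rw [this]; exact hcard i
          · have hsub : (b' i).support ⊆
                ((b i).support.erase τ) ∪ ((b i₀).support.erase τ) := by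
              intro d hd
              have hd' := hss i d hd
              have hdτ : d ≠ τ := by
                rintro rfl
                exact (mem_support_iff.mp hd) (hτb' i)
              rcases hd' with h1 | h1
              · exact Finset.mem_union_left _ (Finset.mem_erase.mpr ⟨hdτ, h1⟩)
              · exact Finset.mem_union_right _ (Finset.mem_erase.mpr ⟨hdτ, h1⟩)
            have h1 : ((b i).support.erase τ).card ≤ 1 := by
              rw [Finset.card_erase_of_mem (mem_support_iff.mpr h)]
              have := hcard i; omega
            have h2 : ((b i₀).support.erase τ).card ≤ 1 := by
              rw [Finset.card_erase_of_mem (mem_support_iff.mpr hi₀)]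
              have := hcard i₀; omega
            refine le_trans (Finset.card_le_card hsub) ?_
            exact le_trans (Finset.card_union_le _ _) (by omega)
        have hf' : f ∈ Submodule.span K (Set.range b') := by
          obtain ⟨a, ha⟩ := (Submodule.mem_span_range_iff_exists_fun K).mp hf
          have hsum : ∀ (v : Fin k → MvPolynomial σ K),
              ∑ i, a i • (b i) = ∑ i, a i • b' i
                + (∑ i, a i * (coeff τ (b i) / c)) • b i₀ := by
            intro v
            simp only [hb', smul_sub, Finset.sum_sub_distrib, ← smul_smul,
              ← Finset.smul_sum, Finset.sum_smul]
            rw [sub_add_cancel]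
          have key0 : (∑ i, a i * (coeff τ (b i) / c)) = 0 := by
            have h1 : coeff τ f = 0 := by
              simpa [mem_support_iff, not_not] using hτf
            have h2 : coeff τ (∑ i, a i • b' i) = 0 := by
              rw [coeff_sum]
              refine Finset.sum_eq_zero fun i _ => ?_
              rw [coeff_smul, hτb' i, smul_zero]
            have h3 : coeff τ f =
                (∑ i, a i * (coeff τ (b i) / c)) * c := by
              rw [← ha, hsum b, coeff_add, h2, zero_add, coeff_smul, smul_eq_mul]
            rw [h1] at h3
            exact (mul_eq_zero.mp h3.symm).resolve_right hi₀
          have : f = ∑ i, a i • b' i := by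
            rw [← ha, hsum b, key0, zero_smul, add_zero]
          rw [this]
          exact Submodule.sum_mem _ fun i _ =>
            Submodule.smul_mem _ _ (Submodule.subset_span ⟨i, rfl⟩)
        exact ih (T.erase τ) b' hmeas hV' hcard' hsupp' hf'

lemma exists_binomial_with {B : Set (MvPolynomial σ K)}
    (hB : ∀ b ∈ B, b.support.card ≤ 2) {f : MvPolynomial σ K}
    (hf : f ∈ Submodule.span K B) {μ : σ →₀ ℕ} (hμ : coeff μ f ≠ 0) :
    ∃ v, v ∈ Submodule.span K B ∧ v.support.card ≤ 2 ∧ v.support ⊆ f.support ∧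
      coeff μ v ≠ 0 := by
  classical
  obtain ⟨k, a, gmem, ha⟩ := Submodule.mem_span_set'.mp hf
  set b : Fin k → MvPolynomial σ K := fun i => (gmem i : MvPolynomial σ K) with hb
  have hfr : f ∈ Submodule.span K (Set.range b) := by
    rw [Submodule.mem_span_range_iff_exists_fun]
    exact ⟨a, ha⟩
  set T : Finset (σ →₀ ℕ) := Finset.univ.biUnion (fun i => (b i).support) with hT
  have hmem : f ∈ Submodule.span K
      {v | v ∈ Submodule.span K B ∧ v.support.card ≤ 2 ∧ v.support ⊆ f.support} :=
    key (Submodule.span K B) f (T \ f.support).card T b le_rfl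
      (fun i => Submodule.subset_span (gmem i).2)
      (fun i => hB _ (gmem i).2)
      (fun i => fun d hd => Finset.mem_biUnion.mpr ⟨i, Finset.mem_univ i, hd⟩)
      hfr
  by_contra hall
  push_neg at hall
  have : Submodule.span K
      {v | v ∈ Submodule.span K B ∧ v.support.card ≤ 2 ∧ v.support ⊆ f.support}
      ≤ LinearMap.ker (lcoeff K μ) := by
    rw [Submodule.span_le]
    rintro v ⟨h1, h2, h3⟩
    simpa [LinearMap.mem_ker, lcoeff] using hall v h1 h2 h3
  have := this hmem
  simp only [LinearMap.mem_ker, lcoeff] at this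
  exact hμ this

end BinAux

/-- Theorem `Binomiality and Intermediates` (algebraic form).  The big ring
`K[y₁,…,y_q,x₁,…,xₙ]` is `MvPolynomial (Fin q ⊕ Fin n) K` with `yᵢ = X (Sum.inl i)`,
`xⱼ = X (Sum.inr j)`; `K[x]` embeds via `rename Sum.inr`.  Let
`I = ⟨g₁,…,g_s, y₁ − h₁, …, y_q − h_q⟩` with `gᵢ, hᵢ ∈ K[x]`, let `G` be the reduced
Gröbner basis of `J = ⟨g₁,…,g_s⟩ ⊆ K[x]` with respect to a monomial order `m`, and let
`rᵢ = Rem(hᵢ, G)`.  Then `I` is binomial iff `J` is binomial and every `rᵢ` has at most one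
term. -/
theorem binomial_iff_core_binomial_and_remainders
    {q n s : ℕ} {K : Type*} [Field K]
    (m : MonomialOrder (Fin n))
    (g : Fin s → MvPolynomial (Fin n) K) (h : Fin q → MvPolynomial (Fin n) K)
    (G : Set (MvPolynomial (Fin n) K))
    (hG : m.IsReducedGroebnerBasis (Ideal.span (Set.range g)) G)
    (r : Fin q → MvPolynomial (Fin n) K)
    (hr : ∀ i, m.IsRemainder (h i) G (r i))
    (I : Ideal (MvPolynomial (Fin q ⊕ Fin n) K))
    (hI : I = Ideal.span
      ((Set.range fun i => rename (Sum.inr : Fin n → Fin q ⊕ Fin n) (g i)) ∪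
        (Set.range fun i : Fin q =>
          X (Sum.inl i) - rename (Sum.inr : Fin n → Fin q ⊕ Fin n) (h i)))) :
    IsBinomialIdeal I ↔
      (IsBinomialIdeal (Ideal.span (Set.range g)) ∧ ∀ i, (r i).support.card ≤ 1) := by
  classical
  set J : Ideal (MvPolynomial (Fin n) K) := Ideal.span (Set.range g) with hJ
  set ι : MvPolynomial (Fin n) K →ₐ[K] MvPolynomial (Fin q ⊕ Fin n) K :=
    rename (Sum.inr : Fin n → Fin q ⊕ Fin n) with hidef
  set ψ : MvPolynomial (Fin q ⊕ Fin n) K →ₐ[K] MvPolynomial (Fin n) K :=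
    aeval (Sum.elim r X) with hψdef
  have hψι : ∀ p : MvPolynomial (Fin n) K, ψ (ι p) = p := by
    intro p
    rw [hψdef, hidef]
    show aeval (Sum.elim r X) (rename Sum.inr p) = p
    rw [aeval_rename, Sum.elim_comp_inr, aeval_X_left_apply]
  have hspanG_le : Ideal.span G ≤ J := Ideal.span_le.mpr hG.1.1
  have hhr : ∀ i, h i - r i ∈ J := fun i => hspanG_le (hr i).1
  have hmapι : Ideal.map ι J ≤ I := by
    rw [hJ, Ideal.map_span]
    rw [Ideal.span_le]
    rintro x ⟨y, ⟨i, rfl⟩, rfl⟩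
    rw [hI]
    exact Ideal.subset_span (Or.inl ⟨i, rfl⟩)
  have hιJ : ∀ p ∈ J, ι p ∈ I := fun p hp => hmapι (Ideal.mem_map_of_mem ι hp)
  have hXh : ∀ i, X (Sum.inl i) - ι (h i) ∈ I := by
    intro i
    rw [hI]
    exact Ideal.subset_span (Or.inr ⟨i, rfl⟩)
  have hXr : ∀ i, X (Sum.inl i) - ι (r i) ∈ I := by
    intro i
    have : X (Sum.inl i) - ι (r i) = (X (Sum.inl i) - ι (h i)) + ι (h i - r i) := by
      rw [map_sub]; ring
    rw [this]
    exact Ideal.add_mem _ (hXh i) (hιJ _ (hhr i))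
  have hmapψ : Ideal.map ψ I = J := by
    rw [hI, Ideal.map_span, Set.image_union, Ideal.span_union]
    have e1 : ψ '' (Set.range fun i => rename (Sum.inr : Fin n → Fin q ⊕ Fin n) (g i))
        = Set.range g := by
      rw [← Set.range_comp]
      refine congrArg Set.range (funext fun i => ?_)
      show ψ (ι (g i)) = g i
      exact hψι (g i)
    have e2 : ψ '' (Set.range fun i : Fin q =>
          X (Sum.inl i) - rename (Sum.inr : Fin n → Fin q ⊕ Fin n) (h i))
        = Set.range fun i => r i - h i := by
      rw [← Set.range_comp]
      refine congrArg Set.range (funext fun i => ?_)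
      show ψ (X (Sum.inl i) - ι (h i)) = r i - h i
      rw [map_sub, hψι (h i), hψdef]
      show aeval (Sum.elim r X) (X (Sum.inl i)) - h i = r i - h i
      rw [aeval_X, Sum.elim_inl]
    rw [e1, e2, ← hJ]
    refine le_antisymm (sup_le le_rfl ?_) le_sup_left
    rw [Ideal.span_le]
    rintro x ⟨i, rfl⟩
    show (r i - h i : MvPolynomial (Fin n) K) ∈ J
    have : r i - h i = -(h i - r i) := by ring
    rw [this]
    exact neg_mem (hhr i)
  have hcard_rename : ∀ p : MvPolynomial (Fin n) K,
      (ι p).support.card = p.support.card := by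
    intro p
    rw [hidef]
    show ((rename Sum.inr p).support.card = p.support.card)
    rw [support_rename_of_injective Sum.inr_injective]
    exact Finset.card_image_of_injective _ (Finsupp.mapDomain_injective Sum.inr_injective)
  constructor
  · rintro ⟨B, hIB, hBcard⟩
    have hrem : ∀ i, (r i).support.card ≤ 1 := by
      intro i
      by_contra hge
      push_neg at hge
      set f : MvPolynomial (Fin q ⊕ Fin n) K := X (Sum.inl i) - ι (r i) with hfdef
      have hfI : f ∈ I := hXr i
      set μ : (Fin q ⊕ Fin n) →₀ ℕ := Finsupp.single (Sum.inl i) 1 with hμdef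
      have hμr : coeff μ (ι (r i)) = 0 := by
        by_contra hc
        rw [hidef] at hc
        obtain ⟨u, hu, -⟩ := coeff_rename_ne_zero _ _ _ hc
        have h0 : (Finsupp.mapDomain Sum.inr u) (Sum.inl i) = 0 :=
          Finsupp.mapDomain_notin_range _ _ (by simp)
        rw [hu, hμdef, Finsupp.single_eq_same] at h0
        exact one_ne_zero h0
      have hμf : coeff μ f = 1 := by
        rw [hfdef, coeff_sub, hμr, coeff_X', if_pos rfl, sub_zero]
      have hsupp_sub : (ι (r i)).support ⊆ f.support := by
        intro d hd
        have hdμ : d ≠ μ := by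
          rintro rfl
          exact (mem_support_iff.mp hd) hμr
        rw [mem_support_iff, hfdef, coeff_sub, coeff_X', if_neg (fun hh => hdμ hh.symm),
          zero_sub, neg_ne_zero]
        exact mem_support_iff.mp hd
      have hμsupp : μ ∈ f.support := mem_support_iff.mpr (by rw [hμf]; exact one_ne_zero)
      set B' : Set (MvPolynomial (Fin q ⊕ Fin n) K) :=
        {v | ∃ d, ∃ b ∈ B, v = monomial d 1 * b} with hB'def
      have hB'card : ∀ v ∈ B', v.support.card ≤ 2 := by
        rintro v ⟨d, b, hb, rfl⟩
        exact le_trans (BinAux.card_support_monomial_mul d b) (hBcard b hb)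
      have hB'I : ∀ v ∈ B', v ∈ I := by
        rintro v ⟨d, b, hb, rfl⟩
        rw [hIB]
        exact Ideal.mul_mem_left _ _ (Ideal.subset_span hb)
      have hfB' : f ∈ Submodule.span K B' := by
        refine BinAux.mem_span_monomial_mul ?_
        rw [← hIB]
        exact hfI
      obtain ⟨v, hvspan, hvcard, hvsupp, hvμ⟩ :=
        BinAux.exists_binomial_with hB'card hfB' (μ := μ) (by rw [hμf]; exact one_ne_zero)
      have hvI : v ∈ I := by
        have hle : Submodule.span K B' ≤
            Submodule.restrictScalars K (I : Submodule (MvPolynomial (Fin q ⊕ Fin n) K) _) :=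
          Submodule.span_le.mpr (fun x hx => hB'I x hx)
        exact hle hvspan
      set c : K := coeff μ v with hcdef
      set w : MvPolynomial (Fin q ⊕ Fin n) K := f - C c⁻¹ * v with hwdef
      have hwI : w ∈ I := sub_mem hfI (Ideal.mul_mem_left _ _ hvI)
      have hμw : coeff μ w = 0 := by
        rw [hwdef, coeff_sub, coeff_C_mul, hμf, ← hcdef, inv_mul_cancel₀ hvμ, sub_self]
      have hμv : μ ∈ v.support := mem_support_iff.mpr hvμ
      have hcard2 : 2 ≤ (ι (r i)).support.card := by
        rw [hcard_rename]; omega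
      have hnot : ¬ (ι (r i)).support ⊆ v.support.erase μ := by
        intro hsub
        have h1 := Finset.card_le_card hsub
        rw [Finset.card_erase_of_mem hμv] at h1
        omega
      obtain ⟨d₀, hd₀r, hd₀e⟩ := Finset.not_subset.mp hnot
      have hd₀μ : d₀ ≠ μ := by
        rintro rfl
        exact (mem_support_iff.mp hd₀r) hμr
      have hd₀v : d₀ ∉ v.support := fun hh => hd₀e (Finset.mem_erase.mpr ⟨hd₀μ, hh⟩)
      have hv0 : coeff d₀ v = 0 := by
        simpa [mem_support_iff, not_not] using hd₀v
      have hd₀w : coeff d₀ w ≠ 0 := by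
        rw [hwdef, coeff_sub, coeff_C_mul, hv0, mul_zero, sub_zero]
        exact mem_support_iff.mp (hsupp_sub hd₀r)
      have hw0 : w ≠ 0 := fun hh => hd₀w (by rw [hh]; simp)
      have hwsupp : w.support ⊆ (ι (r i)).support := by
        intro d hd
        rw [mem_support_iff] at hd
        by_contra hdr
        have hιr0 : coeff d (ι (r i)) = 0 := by
          simpa [mem_support_iff, not_not] using hdr
        have hdμ : d ≠ μ := by
          rintro rfl
          exact hd hμw
        have hdf : coeff d f = 0 := by
          rw [hfdef, coeff_sub, coeff_X', if_neg (fun hh => hdμ hh.symm), hιr0, sub_zero]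
        have hdv : coeff d v = 0 := by
          by_contra hdv
          exact (mem_support_iff.mp (hvsupp (mem_support_iff.mpr hdv))) hdf
        exact hd (by rw [hwdef, coeff_sub, coeff_C_mul, hdf, hdv, mul_zero, sub_zero])
      have himg : (ι (r i)).support
          = Finset.image (Finsupp.mapDomain Sum.inr) (r i).support := by
        rw [hidef]
        exact support_rename_of_injective Sum.inr_injective
      have hwrange : ∃ u, ι u = w := by
        have hmem : w ∈ Subalgebra.toSubmodule ι.range := by
          have hsum : (∑ d ∈ w.support, monomial d (coeff d w))
              ∈ Subalgebra.toSubmodule ι.range := by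
            refine Submodule.sum_mem _ fun d hd => ?_
            have hd' := hwsupp hd
            rw [himg] at hd'
            obtain ⟨e, he, hed⟩ := Finset.mem_image.mp hd'
            rw [Subalgebra.mem_toSubmodule]
            refine ⟨monomial e (coeff d w), ?_⟩
            rw [hidef]
            show rename Sum.inr (monomial e (coeff d w)) = _
            rw [rename_monomial, hed]
          rwa [← w.as_sum] at hsum
        rw [Subalgebra.mem_toSubmodule] at hmem
        obtain ⟨u, hu⟩ := hmem
        exact ⟨u, hu⟩
      obtain ⟨u, hu⟩ := hwrange
      have hu0 : u ≠ 0 := by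
        rintro rfl
        rw [map_zero] at hu
        exact hw0 hu.symm
      have huJ : u ∈ J := by
        have h1 : ψ w ∈ Ideal.map ψ I := Ideal.mem_map_of_mem ψ hwI
        rw [hmapψ] at h1
        rw [← hu, hψι] at h1
        exact h1
      have husupp : u.support ⊆ (r i).support := by
        have hιu : (ι u).support = Finset.image (Finsupp.mapDomain Sum.inr) u.support := by
          rw [hidef]
          exact support_rename_of_injective Sum.inr_injective
        have h1 : Finset.image (Finsupp.mapDomain (Sum.inr : Fin n → Fin q ⊕ Fin n)) u.support
            ⊆ Finset.image (Finsupp.mapDomain (Sum.inr : Fin n → Fin q ⊕ Fin n)) (r i).support := by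
          rw [← himg, ← hιu, hu]
          exact hwsupp
        exact (Finset.image_subset_image_iff
          (Finsupp.mapDomain_injective Sum.inr_injective)).mp h1
      have hlexp : m.lexp u ∈ u.support := by
        have hne : u.support.Nonempty := by
          rw [Finset.nonempty_iff_ne_empty]
          intro hh
          exact hu0 (support_eq_empty.mp hh)
        obtain ⟨d, hd, hds⟩ := Finset.exists_mem_eq_sup u.support hne (fun d => m.toSyn d)
        have : m.lexp u = d := by
          rw [MonomialOrder.lexp, hds, AddEquiv.symm_apply_apply]
        rw [this]
        exact hd
      have hltu : m.leadTerm u ∈ Ideal.span (m.leadTerm '' G) := by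
        rw [← hG.1.2]
        exact Ideal.subset_span ⟨u, huJ, rfl⟩
      have hsub2 : m.leadTerm '' G ⊆ (fun s => monomial s (1 : K)) '' (m.lexp '' G) := by
        rintro x ⟨g₀, hg₀, rfl⟩
        exact ⟨m.lexp g₀, ⟨g₀, hg₀, rfl⟩,
          by rw [MonomialOrder.leadTerm, hG.2.1 g₀ hg₀]⟩
      have hltu2 : m.leadTerm u ∈
          Ideal.span ((fun s => monomial s (1 : K)) '' (m.lexp '' G)) :=
        Ideal.span_mono hsub2 hltu
      have hmemsup : m.lexp u ∈ (m.leadTerm u).support := by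
        rw [MonomialOrder.leadTerm, support_monomial,
          if_neg (mem_support_iff.mp hlexp)]
        exact Finset.mem_singleton_self _
      obtain ⟨s', ⟨g₀, hg₀G, rfl⟩, hle⟩ :=
        mem_ideal_span_monomial_image.mp hltu2 (m.lexp u) hmemsup
      have hg₀0 : g₀ ≠ 0 := by
        intro hh
        have h1 := hG.2.1 g₀ hg₀G
        rw [hh] at h1
        simp at h1
      exact (hr i).2 (m.lexp u) (husupp hlexp) g₀ hg₀G hg₀0 hle
    refine ⟨⟨ψ '' B, ?_, ?_⟩, hrem⟩
    · rw [← hmapψ, hIB, Ideal.map_span]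
    · rintro f ⟨b, hb, rfl⟩
      refine le_trans ?_ (hBcard b hb)
      rw [hψdef]
      refine BinAux.card_support_aeval_le _ ?_ b
      rintro (i | j)
      · rw [Sum.elim_inl]; exact hrem i
      · rw [Sum.elim_inr, support_X]; simp
  · rintro ⟨⟨B₀, hJB₀, hB₀card⟩, hrem⟩
    refine ⟨(⇑ι '' B₀) ∪ Set.range (fun i => X (Sum.inl i) - ι (r i)), ?_, ?_⟩
    · refine le_antisymm ?_ ?_
      · rw [hI, Ideal.span_le]
        rintro x (⟨i, rfl⟩ | ⟨i, rfl⟩)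
        · have hg : g i ∈ J := Ideal.subset_span ⟨i, rfl⟩
          rw [hJB₀] at hg
          have : ι (g i) ∈ Ideal.map ι (Ideal.span B₀) := Ideal.mem_map_of_mem ι hg
          rw [Ideal.map_span] at this
          exact Ideal.span_mono Set.subset_union_left this
        · show X (Sum.inl i) - ι (h i) ∈ _
          have heq : X (Sum.inl i) - ι (h i)
              = (X (Sum.inl i) - ι (r i)) - ι (h i - r i) := by
            rw [map_sub]; ring
          rw [heq]
          refine sub_mem (Ideal.subset_span (Or.inr ⟨i, rfl⟩)) ?_
          have : ι (h i - r i) ∈ Ideal.map ι (Ideal.span B₀) := by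
            refine Ideal.mem_map_of_mem ι ?_
            rw [← hJB₀]; exact hhr i
          rw [Ideal.map_span] at this
          exact Ideal.span_mono Set.subset_union_left this
      · rw [Ideal.span_le]
        rintro x (⟨b, hb, rfl⟩ | ⟨i, rfl⟩)
        · refine hιJ b ?_
          rw [hJB₀]
          exact Ideal.subset_span hb
        · exact hXr i
    · rintro f (⟨b, hb, rfl⟩ | ⟨i, rfl⟩)
      · rw [hcard_rename]
        exact hB₀card b hb
      · show ((X (Sum.inl i) - ι (r i)).support.card ≤ 2)
        refine le_trans (Finset.card_le_card (support_sub _ _ _)) ?_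
        refine le_trans (Finset.card_union_le _ _) ?_
        have h1 : (X (Sum.inl i) : MvPolynomial (Fin q ⊕ Fin n) K).support.card = 1 := by
          rw [support_X]; simp
        have h2 : (ι (r i)).support.card ≤ 1 := by rw [hcard_rename]; exact hrem i
        omega
end

section
/- Let I ⊆ K[y_1,...,y_m, x_1,...,x_n] be the ideal generated by polynomials g_1,...,g_s ∈ K[x] together with H_i = y_i − c_i · x^{a_i}, where c_i ∈ K and x^{a_i} is a monomial in x, for i = 1,...,m. Then I is a binomial ideal if and only if J = ⟨g_1,...,g_s⟩ ⊆ K[x] is a binomial ideal. -/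
open MvPolynomial

section Aux

variable {q n : ℕ} {K : Type*} [Field K]

/-- The substitution map `yᵢ ↦ cᵢ x^{aᵢ}`, `xⱼ ↦ xⱼ`. -/
noncomputable def phiSub (c : Fin q → K) (a : Fin q → (Fin n →₀ ℕ)) :
    MvPolynomial (Fin q ⊕ Fin n) K →ₐ[K] MvPolynomial (Fin n) K :=
  aeval (Sum.elim (fun i => monomial (a i) (c i)) X)

lemma phiSub_rename (c : Fin q → K) (a : Fin q → (Fin n →₀ ℕ))
    (p : MvPolynomial (Fin n) K) :
    phiSub c a (rename (Sum.inr : Fin n → Fin q ⊕ Fin n) p) = p := by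
  rw [phiSub, aeval_rename]
  simp [Sum.elim_comp_inr, aeval_X_left_apply]

lemma phiSub_X (c : Fin q → K) (a : Fin q → (Fin n →₀ ℕ)) (v : Fin q ⊕ Fin n) :
    ∃ e k, phiSub c a (X v) = monomial e k := by
  cases v with
  | inl i => exact ⟨a i, c i, by simp [phiSub]⟩
  | inr j =>
    refine ⟨Finsupp.single j 1, 1, ?_⟩
    have : (X j : MvPolynomial (Fin n) K) = monomial (Finsupp.single j 1) 1 := rfl
    rw [← this]
    simp [phiSub]

lemma phiSub_monomial (c : Fin q → K) (a : Fin q → (Fin n →₀ ℕ))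
    (d : Fin q ⊕ Fin n →₀ ℕ) (r : K) :
    ∃ e k, phiSub c a (monomial d r) = monomial e k := by
  induction d using Finsupp.induction with
  | zero => exact ⟨0, r, by simp [phiSub]⟩
  | single_add v m f _ _ ih =>
    obtain ⟨e, k, he⟩ := ih
    obtain ⟨e', k', he'⟩ := phiSub_X c a v
    refine ⟨m • e' + e, k' ^ m * k, ?_⟩
    rw [MvPolynomial.monomial_single_add, map_mul, map_pow, he, he',
      MvPolynomial.monomial_pow, MvPolynomial.monomial_mul]

lemma phiSub_card_le (c : Fin q → K) (a : Fin q → (Fin n →₀ ℕ))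
    (f : MvPolynomial (Fin q ⊕ Fin n) K) :
    (phiSub c a f).support.card ≤ f.support.card := by
  classical
  conv_lhs => rw [f.as_sum, map_sum]
  calc (∑ v ∈ f.support, phiSub c a (monomial v (coeff v f))).support.card
      ≤ (f.support.biUnion fun v => (phiSub c a (monomial v (coeff v f))).support).card :=
        Finset.card_le_card MvPolynomial.support_sum
    _ ≤ ∑ v ∈ f.support, (phiSub c a (monomial v (coeff v f))).support.card :=
        Finset.card_biUnion_le
    _ ≤ ∑ _v ∈ f.support, 1 := by
        refine Finset.sum_le_sum fun v _ => ?_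
        obtain ⟨e, k, he⟩ := phiSub_monomial c a v (coeff v f)
        rw [he, MvPolynomial.support_monomial]
        split <;> simp
    _ = f.support.card := by simp

lemma phiSub_H (c : Fin q → K) (a : Fin q → (Fin n →₀ ℕ)) (i : Fin q) :
    phiSub c a (X (Sum.inl i) -
      monomial (Finsupp.mapDomain (Sum.inr : Fin n → Fin q ⊕ Fin n) (a i)) (c i)) = 0 := by
  rw [map_sub, ← MvPolynomial.rename_monomial, phiSub_rename]
  simp [phiSub]

end Aux

/-- The 1-input intermediate case (Corollary on 1-input intermediates).  The big ring
`K[y₁,…,y_q,x₁,…,xₙ]` is `MvPolynomial (Fin q ⊕ Fin n) K` with `yᵢ = X (Sum.inl i)` and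
`xⱼ = X (Sum.inr j)`.  Let `I` be generated by `g₁,…,g_s ∈ K[x]` together with
`Hᵢ = yᵢ − cᵢ·x^{aᵢ}` where each `cᵢ·x^{aᵢ}` is a single term in the `x`-variables.
Then `I` is binomial iff `J = ⟨g₁,…,g_s⟩ ⊆ K[x]` is binomial. -/
theorem binomial_iff_core_binomial_one_input
    {q n s : ℕ} {K : Type*} [Field K]
    (g : Fin s → MvPolynomial (Fin n) K)
    (c : Fin q → K) (a : Fin q → (Fin n →₀ ℕ))
    (I : Ideal (MvPolynomial (Fin q ⊕ Fin n) K))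
    (hI : I = Ideal.span
      ((Set.range fun i => rename (Sum.inr : Fin n → Fin q ⊕ Fin n) (g i)) ∪
        (Set.range fun i : Fin q =>
          X (Sum.inl i) -
            monomial (Finsupp.mapDomain (Sum.inr : Fin n → Fin q ⊕ Fin n) (a i)) (c i)))) :
    IsBinomialIdeal I ↔ IsBinomialIdeal (Ideal.span (Set.range g)) := by
  classical
  set φ := (phiSub c a : MvPolynomial (Fin q ⊕ Fin n) K →ₐ[K] MvPolynomial (Fin n) K)
  set H : Fin q → MvPolynomial (Fin q ⊕ Fin n) K := fun i =>
    X (Sum.inl i) -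
      monomial (Finsupp.mapDomain (Sum.inr : Fin n → Fin q ⊕ Fin n) (a i)) (c i)
  -- the image of I under φ is J
  have hmap : Ideal.map (φ : MvPolynomial (Fin q ⊕ Fin n) K →+* MvPolynomial (Fin n) K) I
      = Ideal.span (Set.range g) := by
    rw [hI, Ideal.map_span, Set.image_union, Ideal.span_union]
    have h1 : (φ : MvPolynomial (Fin q ⊕ Fin n) K →+* MvPolynomial (Fin n) K) ''
        (Set.range fun i => rename (Sum.inr : Fin n → Fin q ⊕ Fin n) (g i)) = Set.range g := by
      rw [← Set.range_comp]
      congr 1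
      funext i
      exact phiSub_rename c a (g i)
    have h2 : Ideal.span ((φ : MvPolynomial (Fin q ⊕ Fin n) K →+* MvPolynomial (Fin n) K) ''
        (Set.range H)) = ⊥ := by
      rw [Ideal.span_eq_bot]
      rintro - ⟨-, ⟨i, rfl⟩, rfl⟩
      exact phiSub_H c a i
    rw [h1, h2, sup_bot_eq]
  constructor
  · rintro ⟨B, hB, hcard⟩
    refine ⟨(φ : MvPolynomial (Fin q ⊕ Fin n) K →+* MvPolynomial (Fin n) K) '' B, ?_, ?_⟩
    · rw [← hmap, hB, Ideal.map_span]
    · rintro - ⟨f, hf, rfl⟩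
      exact le_trans (phiSub_card_le c a f) (hcard f hf)
  · rintro ⟨B, hB, hcard⟩
    refine ⟨(rename (Sum.inr : Fin n → Fin q ⊕ Fin n) '' B) ∪ Set.range H, ?_, ?_⟩
    · have key : ∀ S : Set (MvPolynomial (Fin n) K),
          Ideal.span (rename (Sum.inr : Fin n → Fin q ⊕ Fin n) '' S ∪ Set.range H)
            = Ideal.map (rename (Sum.inr : Fin n → Fin q ⊕ Fin n) :
                MvPolynomial (Fin n) K →ₐ[K] MvPolynomial (Fin q ⊕ Fin n) K).toRingHom
                (Ideal.span S)
              ⊔ Ideal.span (Set.range H) := by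
        intro S
        rw [Ideal.span_union, Ideal.map_span]
        rfl
      have hrg : (Set.range fun i => rename (Sum.inr : Fin n → Fin q ⊕ Fin n) (g i))
          = rename (Sum.inr : Fin n → Fin q ⊕ Fin n) '' Set.range g := by
        rw [← Set.range_comp]; rfl
      rw [hI, hrg, key, key, hB]
    · rintro f (⟨p, hp, rfl⟩ | ⟨i, rfl⟩)
      · rw [MvPolynomial.support_rename_of_injective Sum.inr_injective]
        exact le_trans Finset.card_image_le (hcard p hp)
      · refine le_trans (Finset.card_le_card (MvPolynomial.support_sub _ _ _)) ?_
        refine le_trans (Finset.card_union_le _ _) ?_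
        have hx : (X (Sum.inl i) : MvPolynomial (Fin q ⊕ Fin n) K).support.card = 1 := by
          rw [MvPolynomial.support_X]; simp
        have hm : ((monomial (Finsupp.mapDomain (Sum.inr : Fin n → Fin q ⊕ Fin n) (a i))
            (c i)) : MvPolynomial (Fin q ⊕ Fin n) K).support.card ≤ 1 := by
          rw [MvPolynomial.support_monomial]
          split <;> simp
        omega
end
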